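/- Let (G^{α})_{α≥1} be a decreasing chain of inverse systems of groups over a poset I (i.e. for each i ∈ I a descending chain of subgroups G_i^1 ⊇ G_i^2 ⊇ ⋯ compatible with transition maps) such that: (a) for each α ≥ 1, lim_{i∈I}(G_i^α/G_i^{α+1}) is trivial in the sense that lim¹_{i∈I}(G_i^α/G_i^{α+1}) = 0 and the maps lim¹ G_i^{α+1} → lim¹ G_i^α are surjective; (b) for each i ∈ I there exists α_i with G_i^{α'} = 1 for α' > α_i. Then lim¹_{i∈I} G_i^α is the trivial pointed set for every α ≥ 1. -/
import Mathlib


section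
variable {I : Type*} [PartialOrder I] (G : I → Type*) [∀ i, Group (G i)]
  (π : ∀ ⦃j i : I⦄, j ≤ i → (G i →* G j))

/-- A cocycle for the inverse system at level `α`: a family `(z_j^i ∈ K_j^α)_{j ≤ i}`
satisfying the cocycle condition `z_k^i = π_k^j(z_j^i) · z_k^j`. -/
def IsCocycleAt (K : ∀ i, ℕ → Subgroup (G i)) (α : ℕ)
    (z : ∀ ⦃j i : I⦄, j ≤ i → G j) : Prop :=
  (∀ ⦃j i : I⦄ (h : j ≤ i), z h ∈ K j α) ∧
  (∀ ⦃k j i : I⦄ (hkj : k ≤ j) (hji : j ≤ i),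
    z (hkj.trans hji) = π hkj (z hji) * z hkj)

/-- **Triviality of `lim¹` along a complete descending chain of inverse systems of
groups.**
Let `(G_i^α)_{α ≥ 1}` be a descending chain of inverse systems of groups over a poset
`I` (realized as subgroups `K i α` of ambient groups `G i`).  Assume:
(a) for each `α ≥ 1`, `lim¹` of the quotient system `G^α/G^{α+1}` is trivial and the
map `lim¹ G^{α+1} → lim¹ G^α` is surjective; and
(b) for each `i` the chain `G_i^α` is eventually trivial.
Then `lim¹ G^α` is the trivial pointed set for every `α ≥ 1`: every level-`α`
cocycle is a coboundary of a family with values in `G^α`. -/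
theorem statement12
    (hπrefl : ∀ (i : I) (h : i ≤ i), π h = MonoidHom.id (G i))
    (hπtrans : ∀ ⦃k j i : I⦄ (hkj : k ≤ j) (hji : j ≤ i) (x : G i),
      π hkj (π hji x) = π (hkj.trans hji) x)
    (K : ∀ i, ℕ → Subgroup (G i))
    -- descending chain
    (hdesc : ∀ (i : I) (α : ℕ), K i (α + 1) ≤ K i α)
    -- `K i (α+1)` is normal in `K i α`
    (hnorm : ∀ (i : I) (α : ℕ), ∀ g ∈ K i α, ∀ n ∈ K i (α + 1),
      g * n * g⁻¹ ∈ K i (α + 1))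
    -- transition maps respect the chain
    (hπK : ∀ (α : ℕ) ⦃j i : I⦄ (h : j ≤ i), ∀ g ∈ K i α, π h g ∈ K j α)
    -- (a) `lim¹ (G^α/G^{α+1}) = 0` ...
    (ha1 : ∀ α : ℕ, 1 ≤ α → ∀ z : ∀ ⦃j i : I⦄, j ≤ i → G j,
      IsCocycleAt G π K α z →
      ∃ b : ∀ i, G i, (∀ i, b i ∈ K i α) ∧
        ∀ ⦃j i : I⦄ (h : j ≤ i),
          (π h (b i) * (b j)⁻¹)⁻¹ * z h ∈ K j (α + 1))
    -- ... and the maps `lim¹ G^{α+1} → lim¹ G^α` are surjective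
    (ha2 : ∀ α : ℕ, 1 ≤ α → ∀ z : ∀ ⦃j i : I⦄, j ≤ i → G j,
      IsCocycleAt G π K α z →
      ∃ (z' : ∀ ⦃j i : I⦄, j ≤ i → G j) (b : ∀ i, G i),
        IsCocycleAt G π K (α + 1) z' ∧ (∀ i, b i ∈ K i α) ∧
        ∀ ⦃j i : I⦄ (h : j ≤ i), z h = π h (b i) * z' h * (b j)⁻¹)
    -- (b) eventual triviality
    (hb : ∀ i : I, ∃ αᵢ : ℕ, ∀ α' : ℕ, αᵢ < α' → K i α' = ⊥) :
    ∀ α : ℕ, 1 ≤ α → ∀ z : ∀ ⦃j i : I⦄, j ≤ i → G j,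
      IsCocycleAt G π K α z →
      ∃ b : ∀ i, G i, (∀ i, b i ∈ K i α) ∧
        ∀ ⦃j i : I⦄ (h : j ≤ i), z h = π h (b i) * (b j)⁻¹ := by
  intro α hα z hz
  classical
  have hstep : ∀ (n : ℕ) (w : ∀ ⦃j i : I⦄, j ≤ i → G j),
      IsCocycleAt G π K (α + n) w →
      ∃ (z' : ∀ ⦃j i : I⦄, j ≤ i → G j) (b : ∀ i, G i),
        IsCocycleAt G π K (α + n + 1) z' ∧ (∀ i, b i ∈ K i (α + n)) ∧
        ∀ ⦃j i : I⦄ (h : j ≤ i), w h = π h (b i) * z' h * (b j)⁻¹ :=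
    fun n w hw => ha2 (α + n) (le_trans hα (Nat.le_add_right α n)) w hw
  let f : ∀ n : ℕ, {w : ∀ ⦃j i : I⦄, j ≤ i → G j // IsCocycleAt G π K (α + n) w} :=
    fun n => Nat.rec ⟨z, hz⟩
      (fun n p => ⟨(hstep n p.1 p.2).choose,
        ((hstep n p.1 p.2).choose_spec).choose_spec.1⟩) n
  let bs : ℕ → ∀ i, G i := fun n => ((hstep n (f n).1 (f n).2).choose_spec).choose
  have hbsK : ∀ n i, bs n i ∈ K i (α + n) :=
    fun n i => ((hstep n (f n).1 (f n).2).choose_spec).choose_spec.2.1 i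
  have hfe : ∀ (n : ℕ) ⦃j i : I⦄ (h : j ≤ i),
      (f n).1 h = π h (bs n i) * (f (n + 1)).1 h * (bs n j)⁻¹ :=
    fun n _ _ h => ((hstep n (f n).1 (f n).2).choose_spec).choose_spec.2.2 h
  have hKle : ∀ (i : I) (n : ℕ), K i (α + n) ≤ K i α := by
    intro i n
    induction n with
    | zero => exact le_rfl
    | succ n ih => exact le_trans (hdesc i (α + n)) ih
  let c : ℕ → ∀ i, G i := fun n =>
    Nat.rec (fun _ => 1) (fun n cn i => cn i * bs n i) n
  have hcK : ∀ n i, c n i ∈ K i α := by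
    intro n
    induction n with
    | zero => intro i; exact (K i α).one_mem
    | succ n ih => intro i; exact (K i α).mul_mem (ih i) (hKle i n (hbsK n i))
  have hceq : ∀ (n : ℕ) ⦃j i : I⦄ (h : j ≤ i),
      z h = π h (c n i) * (f n).1 h * (c n j)⁻¹ := by
    intro n
    induction n with
    | zero =>
      intro j i h
      show z h = π h 1 * z h * (1 : G j)⁻¹
      simp
    | succ n ih =>
      intro j i h
      have e1 := ih h
      have e2 := hfe n h
      show z h = π h (c n i * bs n i) * (f (n + 1)).1 h * (c n j * bs n j)⁻¹
      rw [map_mul, mul_inv_rev, e1, e2]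
      group
  have hcstab : ∀ (i : I) (n m : ℕ), (hb i).choose < α + n → n ≤ m →
      c m i = c n i := by
    intro i n m hn hnm
    induction m, hnm using Nat.le_induction with
    | base => rfl
    | succ m hnm ih =>
      have hbot : K i (α + m) = ⊥ := (hb i).choose_spec (α + m) (by omega)
      have hone : bs m i = 1 := by
        have hm := hbsK m i
        rw [hbot] at hm
        simpa using hm
      show c m i * bs m i = c n i
      rw [hone, mul_one, ih]
  refine ⟨fun i => c ((hb i).choose + 1) i, fun i => hcK ((hb i).choose + 1) i, ?_⟩
  intro j i h
  set n := (hb i).choose + (hb j).choose + 2 with hn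
  have hzi : c n i = c ((hb i).choose + 1) i :=
    hcstab i ((hb i).choose + 1) n (by omega) (by omega)
  have hzj : c n j = c ((hb j).choose + 1) j :=
    hcstab j ((hb j).choose + 1) n (by omega) (by omega)
  have hbot : K j (α + n) = ⊥ := (hb j).choose_spec (α + n) (by omega)
  have hone : (f n).1 h = 1 := by
    have hm := (f n).2.1 h
    rw [hbot] at hm
    simpa using hm
  have heq := hceq n h
  rw [hzi, hzj, hone] at heq
  simpa using heq

end
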